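/- Let n ≥ 4 and L > 2n be integers and fix x ∈ Λ_L. The set of configurations ξ such that ξ = σ^{u,v}η^x for some pair of adjacent sites u, v, ξ ≠ η^x, and H(ξ) = −2n(n−1) + 2, has exactly 8 elements (each of the 4 corner particles of the square moved to one of its 2 outward adjacent empty sites). -/

import Mathlib

open scoped Classical

noncomputable section

/-- A site of the discrete torus `Λ_L`. -/
abbrev Site (L : ℕ) := ZMod L × ZMod L

/-- Two sites of the discrete torus are adjacent if their difference is a unit vector. -/
def torusAdj (L : ℕ) (u v : Site L) : Prop :=
  u - v = (1, 0) ∨ u - v = (-1, 0) ∨ u - v = (0, 1) ∨ u - v = (0, -1)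

/-- `e(S)`: the number of unordered pairs of adjacent sites contained in `S`. -/
def torusE (L : ℕ) (S : Finset (Site L)) : ℕ :=
  ((S ×ˢ S).filter fun p => torusAdj L p.1 p.2).card / 2

/-- A lattice-gas configuration on `Λ_L`. -/
abbrev Config (L : ℕ) := Site L → Bool

/-- The set of sites occupied by the configuration `η`. -/
def occupied (L : ℕ) [NeZero L] (η : Config L) : Finset (Site L) :=
  Finset.univ.filter fun x => η x = true

/-- The Hamiltonian `H(η) = −Σ η(x)η(y)` (sum over unordered pairs of adjacent sites),
i.e. minus the number of adjacent occupied pairs, as an integer. -/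
def confH (L : ℕ) [NeZero L] (η : Config L) : ℤ :=
  -(torusE L (occupied L η) : ℤ)

/-- `σ^{u,v}η`: the configuration obtained from `η` by exchanging the occupation
variables at `u` and `v`. -/
def swapConf (L : ℕ) (η : Config L) (u v : Site L) : Config L :=
  fun z => if z = u then η v else if z = v then η u else η z

/-- The occupied set `Q_x = x + {0,…,n−1}²` of the square configuration `η^x`. -/
def squareSet (L n : ℕ) (x : Site L) : Finset (Site L) :=
  (Finset.range n ×ˢ Finset.range n).image fun p => x + ((p.1 : ZMod L), (p.2 : ZMod L))

/-- The square configuration `η^x`, whose occupied set is `Q_x`. -/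
def squareConf (L n : ℕ) (x : Site L) : Config L :=
  fun z => decide (z ∈ squareSet L n x)

namespace SqAux

/-- ℤ² adjacency -/
def adjZ (p q : ℤ × ℤ) : Prop :=
  p - q = (1, 0) ∨ p - q = (-1, 0) ∨ p - q = (0, 1) ∨ p - q = (0, -1)

lemma adjZ_comm {p q : ℤ × ℤ} (h : adjZ p q) : adjZ q p := by
  obtain ⟨a, b⟩ := p; obtain ⟨c, d⟩ := q
  simp only [adjZ, Prod.mk_sub_mk, Prod.mk.injEq] at h ⊢
  omega

lemma adjZ_irrefl (p : ℤ × ℤ) : ¬ adjZ p p := by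
  obtain ⟨a, b⟩ := p
  simp only [adjZ, Prod.mk_sub_mk, Prod.mk.injEq]
  omega

lemma adjZ_iff {w q : ℤ × ℤ} :
    adjZ w q ↔ (q = w + (1,0) ∨ q = w - (1,0) ∨ q = w + (0,1) ∨ q = w - (0,1)) := by
  obtain ⟨a, b⟩ := w; obtain ⟨c, d⟩ := q
  simp only [adjZ, Prod.mk_sub_mk, Prod.mk_add_mk, Prod.mk.injEq]
  omega

def gridZ (n : ℕ) : Finset (ℤ × ℤ) := Finset.Ico (0:ℤ) n ×ˢ Finset.Ico (0:ℤ) n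

lemma mem_gridZ {n : ℕ} {p : ℤ × ℤ} :
    p ∈ gridZ n ↔ 0 ≤ p.1 ∧ p.1 < n ∧ 0 ≤ p.2 ∧ p.2 < n := by
  simp [gridZ, Finset.mem_product, and_assoc]

/-- degree of w in S -/
def degZ (S : Finset (ℤ × ℤ)) (w : ℤ × ℤ) : ℕ := (S.filter (adjZ w)).card

/-- number of ordered adjacent pairs in S -/
def E2 (S : Finset (ℤ × ℤ)) : ℕ := ((S ×ˢ S).filter fun pq => adjZ pq.1 pq.2).card

lemma E2_eq_sum (S : Finset (ℤ × ℤ)) : E2 S = ∑ p ∈ S, degZ S p := by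
  unfold E2 degZ
  rw [Finset.card_filter, Finset.sum_product]
  refine Finset.sum_congr rfl fun p _ => ?_
  rw [Finset.card_filter]

lemma degZ_eq (S : Finset (ℤ × ℤ)) (w : ℤ × ℤ) :
    degZ S w = (if w + (1,0) ∈ S then 1 else 0) + (if w - (1,0) ∈ S then 1 else 0)
      + (if w + (0,1) ∈ S then 1 else 0) + (if w - (0,1) ∈ S then 1 else 0) := by
  have hset : S.filter (adjZ w)
      = ({w + (1,0), w - (1,0), w + (0,1), w - (0,1)} : Finset (ℤ × ℤ)).filter (· ∈ S) := by
    ext q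
    simp only [Finset.mem_filter, Finset.mem_insert, Finset.mem_singleton, adjZ_iff]
    tauto
  have d12 : w + (1,0) ≠ w - (1,0) := by simp [Prod.ext_iff] <;> omega
  have d13 : w + (1,0) ≠ w + (0,1) := by simp [Prod.ext_iff]
  have d14 : w + (1,0) ≠ w - (0,1) := by simp [Prod.ext_iff] <;> omega
  have d23 : w - (1,0) ≠ w + (0,1) := by simp [Prod.ext_iff] <;> omega
  have d24 : w - (1,0) ≠ w - (0,1) := by simp [Prod.ext_iff] <;> omega
  have d34 : w + (0,1) ≠ w - (0,1) := by simp [Prod.ext_iff] <;> omega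
  unfold degZ
  rw [hset, Finset.card_filter]
  rw [Finset.sum_insert (by simp [d12, d13, d14]),
      Finset.sum_insert (by simp [d23, d24]),
      Finset.sum_insert (by simp [d34]), Finset.sum_singleton]
  ring

lemma E2_insert {S : Finset (ℤ × ℤ)} {v : ℤ × ℤ} (hv : v ∉ S) :
    E2 (insert v S) = E2 S + 2 * degZ S v := by
  rw [E2_eq_sum, Finset.sum_insert hv, E2_eq_sum]
  have h1 : degZ (insert v S) v = degZ S v := by
    unfold degZ
    rw [Finset.filter_insert, if_neg (adjZ_irrefl v)]
  have h2 : ∀ p ∈ S, degZ (insert v S) p = degZ S p + (if adjZ p v then 1 else 0) := by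
    intro p _
    unfold degZ
    rw [Finset.filter_insert]
    by_cases h : adjZ p v
    · rw [if_pos h, Finset.card_insert_of_notMem (fun hmem => hv (Finset.mem_of_mem_filter _ hmem)), if_pos h]
    · rw [if_neg h, if_neg h, Nat.add_zero]
  rw [Finset.sum_congr rfl h2, Finset.sum_add_distrib, h1]
  have h3 : (∑ p ∈ S, if adjZ p v then 1 else 0) = degZ S v := by
    rw [degZ, Finset.card_filter]
    refine Finset.sum_congr rfl fun p _ => ?_
    by_cases h : adjZ p v
    · rw [if_pos h, if_pos (adjZ_comm h)]
    · rw [if_neg h, if_neg (fun hh => h (adjZ_comm hh))]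
  rw [h3]; ring

lemma degZ_erase_self (S : Finset (ℤ × ℤ)) (u : ℤ × ℤ) : degZ (S.erase u) u = degZ S u := by
  unfold degZ
  rw [Finset.filter_erase, Finset.erase_eq_of_notMem]
  simp [adjZ_irrefl]

lemma degZ_erase_adj {S : Finset (ℤ × ℤ)} {u v : ℤ × ℤ} (hu : u ∈ S) (h : adjZ v u) :
    degZ (S.erase u) v + 1 = degZ S v := by
  unfold degZ
  rw [Finset.filter_erase]
  exact Finset.card_erase_add_one (Finset.mem_filter.2 ⟨hu, h⟩)

/-- Key perturbation identity. -/
lemma E2_perturb {S : Finset (ℤ × ℤ)} {u v : ℤ × ℤ} (hu : u ∈ S) (hv : v ∉ S)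
    (h : adjZ v u) :
    E2 (insert v (S.erase u)) + 2 * degZ S u + 2 = E2 S + 2 * degZ S v := by
  have hv' : v ∉ S.erase u := fun hh => hv (Finset.mem_of_mem_erase hh)
  have e1 : E2 (insert v (S.erase u)) = E2 (S.erase u) + 2 * degZ (S.erase u) v :=
    E2_insert hv'
  have e2 : E2 S = E2 (S.erase u) + 2 * degZ (S.erase u) u := by
    have := E2_insert (S := S.erase u) (v := u) (Finset.notMem_erase u S)
    rwa [Finset.insert_erase hu] at this
  have e3 := degZ_erase_self S u
  have e4 := degZ_erase_adj hu h
  omega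

lemma card_dir (S : Finset (ℤ × ℤ)) (c : ℤ × ℤ) :
    ((S ×ˢ S).filter fun pq => pq.1 - pq.2 = c).card
      = (S.filter fun p => p - c ∈ S).card := by
  rw [Finset.card_filter, Finset.sum_product, Finset.card_filter]
  refine Finset.sum_congr rfl fun p _ => ?_
  have he : ∀ q : ℤ × ℤ, (p - q = c) ↔ (p - c = q) := by
    intro q; constructor <;> intro h <;> [rw [← h]; rw [← h]] <;> ring
  calc (∑ q ∈ S, if p - q = c then 1 else 0)
      = ∑ q ∈ S, if p - c = q then 1 else 0 := by
        exact Finset.sum_congr rfl fun q _ => if_congr (he q) rfl rfl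
    _ = if p - c ∈ S then 1 else 0 := Finset.sum_ite_eq S (p - c) (fun _ => 1)

lemma E2_eq_four (S : Finset (ℤ × ℤ)) :
    E2 S = (S.filter fun p => p - (1,0) ∈ S).card + (S.filter fun p => p - (-1,0) ∈ S).card
      + (S.filter fun p => p - (0,1) ∈ S).card + (S.filter fun p => p - (0,-1) ∈ S).card := by
  rw [← card_dir S ((1:ℤ),(0:ℤ)), ← card_dir S ((-1:ℤ),(0:ℤ)),
      ← card_dir S ((0:ℤ),(1:ℤ)), ← card_dir S ((0:ℤ),(-1:ℤ))]
  unfold E2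
  rw [Finset.card_filter, Finset.card_filter, Finset.card_filter, Finset.card_filter,
      Finset.card_filter]
  rw [← Finset.sum_add_distrib, ← Finset.sum_add_distrib, ← Finset.sum_add_distrib]
  refine Finset.sum_congr rfl fun pq _ => ?_
  obtain ⟨⟨a, b⟩, ⟨c, d⟩⟩ := pq
  simp only [adjZ, Prod.mk_sub_mk, Prod.mk.injEq]
  split_ifs <;> omega

lemma toNat_coe (n : ℕ) : ((n : ℤ) - 0).toNat = n := by omega

lemma E2_gridZ {n : ℕ} (hn : 1 ≤ n) : E2 (gridZ n) = 4 * (n * (n - 1)) := by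
  rw [E2_eq_four]
  have h1 : (gridZ n).filter (fun p => p - (1,0) ∈ gridZ n)
      = Finset.Ico (1:ℤ) n ×ˢ Finset.Ico (0:ℤ) n := by
    ext ⟨a, b⟩
    simp [gridZ, Finset.mem_product, Prod.mk_sub_mk]
    omega
  have h2 : (gridZ n).filter (fun p => p - (-1,0) ∈ gridZ n)
      = Finset.Ico (0:ℤ) ((n:ℤ)-1) ×ˢ Finset.Ico (0:ℤ) n := by
    ext ⟨a, b⟩
    simp [gridZ, Finset.mem_product, Prod.mk_sub_mk]
    omega
  have h3 : (gridZ n).filter (fun p => p - (0,1) ∈ gridZ n)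
      = Finset.Ico (0:ℤ) n ×ˢ Finset.Ico (1:ℤ) n := by
    ext ⟨a, b⟩
    simp [gridZ, Finset.mem_product, Prod.mk_sub_mk]
    omega
  have h4 : (gridZ n).filter (fun p => p - (0,-1) ∈ gridZ n)
      = Finset.Ico (0:ℤ) n ×ˢ Finset.Ico (0:ℤ) ((n:ℤ)-1) := by
    ext ⟨a, b⟩
    simp [gridZ, Finset.mem_product, Prod.mk_sub_mk]
    omega
  rw [h1, h2, h3, h4]
  simp only [Finset.card_product, Int.card_Ico]
  obtain ⟨m, rfl⟩ : ∃ m, n = m + 1 := ⟨n - 1, by omega⟩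
  have e1 : ((m + 1 : ℕ) : ℤ) - 1 = (m : ℕ) := by push_cast; ring
  have e2 : (((m+1:ℕ) : ℤ) - 0).toNat = m + 1 := by omega
  have e3 : (((m+1:ℕ) : ℤ) - 1).toNat = m := by omega
  have e4 : ((((m+1:ℕ) : ℤ) - 1) - 0).toNat = m := by omega
  rw [e2, e3, e4]
  simp only [Nat.add_sub_cancel]
  ring
/-- positions we care about live in the box [-1,n]² -/
def boxP (n : ℕ) (p : ℤ × ℤ) : Prop := -1 ≤ p.1 ∧ p.1 ≤ n ∧ -1 ≤ p.2 ∧ p.2 ≤ n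

lemma boxP_of_grid {n : ℕ} {p : ℤ × ℤ} (h : p ∈ gridZ n) : boxP n p := by
  rw [mem_gridZ] at h; exact ⟨by omega, by omega, by omega, by omega⟩

/-- the embedding of ℤ² into the torus, centered at x -/
def emb (L : ℕ) (x : Site L) (p : ℤ × ℤ) : Site L :=
  x + ((p.1 : ZMod L), (p.2 : ZMod L))

variable {L n : ℕ} [NeZero L] {x : Site L}

omit [NeZero L] in
lemma emb_sub (p q : ℤ × ℤ) :
    emb L x p - emb L x q = (((p.1 - q.1 : ℤ) : ZMod L), ((p.2 - q.2 : ℤ) : ZMod L)) := by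
  unfold emb
  rw [add_sub_add_left_eq_sub]
  cases p; cases q
  rw [Prod.mk_sub_mk]
  push_cast
  rfl

lemma cast_small_eq_zero {d : ℤ} (h1 : -(L:ℤ) < d) (h2 : d < L) (h : (d : ZMod L) = 0) :
    d = 0 := by
  rw [ZMod.intCast_zmod_eq_zero_iff_dvd] at h
  rcases eq_or_ne d 0 with h0 | h0
  · exact h0
  · have hle := Int.le_of_dvd (abs_pos.2 h0) ((dvd_abs _ _).2 h)
    rcases abs_cases d with ⟨he, _⟩ | ⟨he, _⟩ <;> omega

lemma cast_inj_small (hn : 4 ≤ n) (hL : 2 * n < L) {a c : ℤ}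
    (ha : -((n:ℤ)+2) ≤ a - c) (hb : a - c ≤ (n:ℤ)+2) :
    ((a : ZMod L) = (c : ZMod L)) ↔ a = c := by
  have hLZ : (2 * n : ℤ) < L := by exact_mod_cast hL
  constructor
  · intro h
    have e : ((a - c : ℤ) : ZMod L) = 0 := by push_cast; rw [h]; ring
    have := cast_small_eq_zero (by omega) (by omega) e
    omega
  · intro h; rw [h]

lemma emb_inj (hn : 4 ≤ n) (hL : 2 * n < L) {p q : ℤ × ℤ}
    (hp : boxP n p) (hq : boxP n q) (h : emb L x p = emb L x q) : p = q := by
  obtain ⟨hp1, hp2, hp3, hp4⟩ := hp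
  obtain ⟨hq1, hq2, hq3, hq4⟩ := hq
  have h' : emb L x p - emb L x q = (((0:ℤ) : ZMod L), ((0:ℤ) : ZMod L)) := by
    rw [h]; simp; rfl
  rw [emb_sub, Prod.mk.injEq] at h'
  have d1 := (cast_inj_small hn hL (a := p.1 - q.1) (c := 0) (by omega) (by omega)).1 h'.1
  have d2 := (cast_inj_small hn hL (a := p.2 - q.2) (c := 0) (by omega) (by omega)).1 h'.2
  exact Prod.ext (by omega) (by omega)

lemma adj_transfer (hn : 4 ≤ n) (hL : 2 * n < L) {p q : ℤ × ℤ}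
    (hp : boxP n p) (hq : boxP n q) :
    torusAdj L (emb L x p) (emb L x q) ↔ adjZ p q := by
  obtain ⟨hp1, hp2, hp3, hp4⟩ := hp
  obtain ⟨hq1, hq2, hq3, hq4⟩ := hq
  have r1 : ((1,0) : Site L) = (((1:ℤ) : ZMod L), ((0:ℤ) : ZMod L)) := by push_cast; rfl
  have r2 : ((-1,0) : Site L) = (((-1:ℤ) : ZMod L), ((0:ℤ) : ZMod L)) := by push_cast; rfl
  have r3 : ((0,1) : Site L) = (((0:ℤ) : ZMod L), ((1:ℤ) : ZMod L)) := by push_cast; rfl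
  have r4 : ((0,-1) : Site L) = (((0:ℤ) : ZMod L), ((-1:ℤ) : ZMod L)) := by push_cast; rfl
  unfold torusAdj
  rw [emb_sub, r1, r2, r3, r4]
  simp only [Prod.mk.injEq]
  rw [cast_inj_small hn hL (by omega) (by omega), cast_inj_small hn hL (by omega) (by omega),
      cast_inj_small hn hL (by omega) (by omega), cast_inj_small hn hL (by omega) (by omega),
      cast_inj_small hn hL (by omega) (by omega), cast_inj_small hn hL (by omega) (by omega)]
  obtain ⟨a, b⟩ := p; obtain ⟨c, d⟩ := q
  simp only [adjZ, Prod.mk_sub_mk, Prod.mk.injEq]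

lemma squareSet_eq : squareSet L n x = (gridZ n).image (emb L x) := by
  ext z
  simp only [squareSet, gridZ, Finset.mem_image, Finset.mem_product, Finset.mem_range,
    Finset.mem_Ico]
  constructor
  · rintro ⟨⟨a, b⟩, ⟨ha, hb⟩, rfl⟩
    refine ⟨((a : ℤ), (b : ℤ)), ⟨⟨?_, ?_⟩, ⟨?_, ?_⟩⟩, ?_⟩
    · show (0:ℤ) ≤ (a:ℤ); positivity
    · show (a:ℤ) < (n:ℤ); exact_mod_cast ha
    · show (0:ℤ) ≤ (b:ℤ); positivity
    · show (b:ℤ) < (n:ℤ); exact_mod_cast hb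
    · unfold emb; push_cast; rfl
  · rintro ⟨⟨a, b⟩, ⟨⟨ha0, ha⟩, ⟨hb0, hb⟩⟩, rfl⟩
    have ha0' : (0:ℤ) ≤ a := ha0
    have hb0' : (0:ℤ) ≤ b := hb0
    have ha' : a < (n:ℤ) := ha
    have hb' : b < (n:ℤ) := hb
    refine ⟨(a.toNat, b.toNat), ⟨?_, ?_⟩, ?_⟩
    · show a.toNat < n; omega
    · show b.toNat < n; omega
    · show x + (((a.toNat : ℕ) : ZMod L), ((b.toNat : ℕ) : ZMod L)) = emb L x (a, b)
      unfold emb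
      congr 1
      rw [Prod.mk.injEq]
      constructor
      · rw [← Int.cast_natCast, Int.toNat_of_nonneg ha0']
      · rw [← Int.cast_natCast, Int.toNat_of_nonneg hb0']

lemma mem_square_iff {p : ℤ × ℤ} (hn : 4 ≤ n) (hL : 2 * n < L) (hp : boxP n p) :
    emb L x p ∈ squareSet L n x ↔ p ∈ gridZ n := by
  rw [squareSet_eq]
  constructor
  · rintro h
    rw [Finset.mem_image] at h
    obtain ⟨t, ht, hte⟩ := h
    rwa [← emb_inj hn hL (boxP_of_grid ht) hp hte]
  · intro h
    exact Finset.mem_image_of_mem _ h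

lemma occupied_squareConf : occupied L (squareConf L n x) = squareSet L n x := by
  ext z
  simp [occupied, squareConf]

omit [NeZero L] in
lemma swapConf_comm (η : Config L) (u v : Site L) :
    swapConf L η u v = swapConf L η v u := by
  funext z
  unfold swapConf
  by_cases h1 : z = u <;> by_cases h2 : z = v
  · subst h1; subst h2; simp
  · subst h1; rw [if_pos rfl, if_neg h2, if_pos rfl]
  · subst h2; rw [if_neg h1, if_pos rfl, if_pos rfl]
  · simp [h1, h2]

omit [NeZero L] in
lemma swapConf_eq_self {η : Config L} {u v : Site L} (h : η u = η v) :
    swapConf L η u v = η := by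
  funext z
  unfold swapConf
  by_cases h1 : z = u
  · subst h1
    by_cases h2 : z = v
    · subst h2; simp
    · simp only [if_pos rfl]; exact h.symm
  · by_cases h2 : z = v
    · subst h2
      simp only [if_neg h1, if_pos rfl]; exact h
    · simp [h1, h2]

lemma occupied_swap {η : Config L} {u v : Site L} (huv : u ≠ v)
    (hu : η u = true) (hv : η v = false) :
    occupied L (swapConf L η u v) = insert v ((occupied L η).erase u) := by
  ext z
  simp only [occupied, swapConf, Finset.mem_insert, Finset.mem_erase, Finset.mem_filter,
    Finset.mem_univ, true_and]
  by_cases h1 : z = u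
  · subst h1
    simp [hv, huv]
  · by_cases h2 : z = v
    · subst h2
      simp [h1, hu]
    · simp [h1, h2]

omit [NeZero L] in
lemma torusAdj_symm {u v : Site L} (h : torusAdj L u v) : torusAdj L v u := by
  have e : v - u = -(u - v) := by ring
  unfold torusAdj at h ⊢
  rcases h with h | h | h | h
  · right; left; rw [e, h]; simp [Prod.ext_iff]
  · left; rw [e, h]; simp [Prod.ext_iff]
  · right; right; right; rw [e, h]; simp [Prod.ext_iff]
  · right; right; left; rw [e, h]; simp [Prod.ext_iff]

/-- transfer of edge counts -/
lemma torusE_image (hn : 4 ≤ n) (hL : 2 * n < L) {T : Finset (ℤ × ℤ)}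
    (hT : ∀ p ∈ T, boxP n p) :
    torusE L (T.image (emb L x)) = E2 T / 2 := by
  unfold torusE E2
  have himg : ((T ×ˢ T).filter fun pq => adjZ pq.1 pq.2).image
        (fun pq : (ℤ×ℤ) × (ℤ×ℤ) => (emb L x pq.1, emb L x pq.2))
      = ((T.image (emb L x) ×ˢ T.image (emb L x)).filter fun p => torusAdj L p.1 p.2) := by
    ext ⟨u, v⟩
    simp only [Finset.mem_image, Finset.mem_filter, Finset.mem_product]
    constructor
    · rintro ⟨⟨p, q⟩, ⟨⟨hp, hq⟩, hadj⟩, heq⟩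
      rw [Prod.mk.injEq] at heq
      obtain ⟨h1, h2⟩ := heq
      subst h1; subst h2
      exact ⟨⟨⟨p, hp, rfl⟩, ⟨q, hq, rfl⟩⟩,
        (adj_transfer hn hL (hT p hp) (hT q hq)).2 hadj⟩
    · rintro ⟨⟨hu, hv⟩, hadj⟩
      obtain ⟨p, hp, rfl⟩ := hu
      obtain ⟨q, hq, rfl⟩ := hv
      exact ⟨(p, q), ⟨⟨hp, hq⟩, (adj_transfer hn hL (hT p hp) (hT q hq)).1 hadj⟩, rfl⟩
  have hinj : Set.InjOn (fun pq : (ℤ×ℤ) × (ℤ×ℤ) => (emb L x pq.1, emb L x pq.2))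
      ((T ×ˢ T).filter fun pq => adjZ pq.1 pq.2) := by
    rintro ⟨p, q⟩ hpq ⟨p', q'⟩ hpq' heq
    rw [Finset.mem_coe, Finset.mem_filter, Finset.mem_product] at hpq hpq'
    simp only [Prod.mk.injEq] at heq ⊢
    exact ⟨emb_inj hn hL (hT _ hpq.1.1) (hT _ hpq'.1.1) heq.1,
      emb_inj hn hL (hT _ hpq.1.2) (hT _ hpq'.1.2) heq.2⟩
  rw [← himg, Finset.card_image_of_injOn hinj]

lemma image_erase (hn : 4 ≤ n) (hL : 2 * n < L) {T : Finset (ℤ × ℤ)}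
    (hT : ∀ p ∈ T, boxP n p) {p : ℤ × ℤ} (hp : boxP n p) :
    (T.erase p).image (emb L x) = (T.image (emb L x)).erase (emb L x p) := by
  ext z
  simp only [Finset.mem_image, Finset.mem_erase]
  constructor
  · rintro ⟨t, ⟨htp, ht⟩, rfl⟩
    exact ⟨fun h => htp (emb_inj hn hL (hT t ht) hp h), ⟨t, ht, rfl⟩⟩
  · rintro ⟨hz, t, ht, rfl⟩
    exact ⟨t, ⟨fun h => hz (by rw [h]), ht⟩, rfl⟩


lemma confH_swap_iff (hn : 4 ≤ n) (hL : 2 * n < L) {p q : ℤ × ℤ}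
    (hp : p ∈ gridZ n) (hq : q ∉ gridZ n) (hadj : adjZ p q) :
    (confH L (swapConf L (squareConf L n x) (emb L x p) (emb L x q))
        = -(2 * (n : ℤ) * ((n : ℤ) - 1)) + 2)
      ↔ degZ (gridZ n) p = degZ (gridZ n) q + 1 := by
  have hboxp := boxP_of_grid hp
  have hp' := mem_gridZ.1 hp
  have hboxq : boxP n q := by
    rcases adjZ_iff.1 hadj with h | h | h | h <;> subst h <;>
      exact ⟨by simp; omega, by simp; omega, by simp; omega, by simp; omega⟩
  have hηp : squareConf L n x (emb L x p) = true := by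
    simp only [squareConf, decide_eq_true_eq]
    exact (mem_square_iff hn hL hboxp).2 hp
  have hηq : squareConf L n x (emb L x q) = false := by
    simp only [squareConf, decide_eq_false_iff_not]
    exact fun h => hq ((mem_square_iff hn hL hboxq).1 h)
  have hne : emb L x p ≠ emb L x q := by
    intro h
    exact hq (emb_inj hn hL hboxp hboxq h ▸ hp)
  have hTbox : ∀ t ∈ insert q ((gridZ n).erase p), boxP n t := by
    intro t ht
    rcases Finset.mem_insert.1 ht with rfl | ht
    · exact hboxq
    · exact boxP_of_grid (Finset.mem_of_mem_erase ht)
  have hocc : occupied L (swapConf L (squareConf L n x) (emb L x p) (emb L x q))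
      = (insert q ((gridZ n).erase p)).image (emb L x) := by
    rw [occupied_swap hne hηp hηq, occupied_squareConf, squareSet_eq,
      ← image_erase hn hL (fun t ht => boxP_of_grid ht) hboxp, ← Finset.image_insert]
  have hE := torusE_image (x := x) hn hL hTbox
  have hpert := E2_perturb (S := gridZ n) hp hq (adjZ_comm hadj)
  have hgrid : E2 (gridZ n) = 4 * (n * (n - 1)) := E2_gridZ (by omega)
  have hM : 12 ≤ n * (n - 1) := by
    have h3 : 3 ≤ n - 1 := by omega
    have := Nat.mul_le_mul hn h3
    omega
  have hcast : ((n * (n - 1) : ℕ) : ℤ) = (n:ℤ) * ((n:ℤ) - 1) := by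
    push_cast [Nat.cast_sub (by omega : 1 ≤ n)]
    ring
  have htgt : -(2 * (n:ℤ) * ((n:ℤ) - 1)) + 2 = -(2 * ((n * (n - 1) : ℕ) : ℤ)) + 2 := by
    rw [hcast]; ring
  rw [htgt]
  simp only [confH]
  rw [hocc, hE]
  rw [hgrid] at hpert
  constructor <;> intro h <;> omega

def Ppts (n : ℕ) : Fin 8 → ℤ × ℤ
  | 0 => (0, 0)
  | 1 => (0, 0)
  | 2 => ((n:ℤ) - 1, 0)
  | 3 => ((n:ℤ) - 1, 0)
  | 4 => (0, (n:ℤ) - 1)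
  | 5 => (0, (n:ℤ) - 1)
  | 6 => ((n:ℤ) - 1, (n:ℤ) - 1)
  | 7 => ((n:ℤ) - 1, (n:ℤ) - 1)

def Qpts (n : ℕ) : Fin 8 → ℤ × ℤ
  | 0 => (-1, 0)
  | 1 => (0, -1)
  | 2 => ((n:ℤ), 0)
  | 3 => ((n:ℤ) - 1, -1)
  | 4 => (-1, (n:ℤ) - 1)
  | 5 => (0, (n:ℤ))
  | 6 => ((n:ℤ), (n:ℤ) - 1)
  | 7 => ((n:ℤ) - 1, (n:ℤ))

omit [NeZero L] in
lemma Ppts_grid (hn : 4 ≤ n) (i : Fin 8) : Ppts n i ∈ gridZ n := by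
  fin_cases i <;> simp [Ppts, mem_gridZ] <;> omega

omit [NeZero L] in
lemma Qpts_not_grid (hn : 4 ≤ n) (i : Fin 8) : Qpts n i ∉ gridZ n := by
  fin_cases i <;> simp [Qpts, mem_gridZ] <;> omega

omit [NeZero L] in
lemma Qpts_box (hn : 4 ≤ n) (i : Fin 8) : boxP n (Qpts n i) := by
  fin_cases i <;> simp [Qpts, boxP] <;> omega

omit [NeZero L] in
lemma adjPQ (hn : 4 ≤ n) (i : Fin 8) : adjZ (Ppts n i) (Qpts n i) := by
  fin_cases i <;> simp [Ppts, Qpts, adjZ, Prod.ext_iff] <;> omega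

omit [NeZero L] in
lemma degP (hn : 4 ≤ n) (i : Fin 8) : degZ (gridZ n) (Ppts n i) = 2 := by
  fin_cases i <;> rw [degZ_eq] <;>
    simp only [Ppts, Prod.mk_add_mk, Prod.mk_sub_mk, mem_gridZ] <;>
    (try split_ifs) <;> omega

omit [NeZero L] in
lemma degQ (hn : 4 ≤ n) (i : Fin 8) : degZ (gridZ n) (Qpts n i) = 1 := by
  fin_cases i <;> rw [degZ_eq] <;>
    simp only [Qpts, Prod.mk_add_mk, Prod.mk_sub_mk, mem_gridZ] <;>
    (try split_ifs) <;> omega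

omit [NeZero L] in
lemma Qpts_inj (hn : 4 ≤ n) : Function.Injective (Qpts n) := by
  intro i j h
  fin_cases i <;> fin_cases j <;>
    first
      | rfl
      | (exfalso; simp only [Qpts, Prod.mk.injEq] at h; omega)

omit [NeZero L] in
set_option maxHeartbeats 1000000 in
lemma deg_classify (hn : 4 ≤ n) {p q : ℤ × ℤ} (hp : p ∈ gridZ n) (hq : q ∉ gridZ n)
    (hadj : adjZ p q) (hdeg : degZ (gridZ n) p = degZ (gridZ n) q + 1) :
    ∃ i : Fin 8, p = Ppts n i ∧ q = Qpts n i := by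
  obtain ⟨a, b⟩ := p; obtain ⟨c, d⟩ := q
  rw [mem_gridZ] at hp
  rw [mem_gridZ] at hq
  simp only [adjZ, Prod.mk_sub_mk, Prod.mk.injEq] at hadj
  rcases hadj with ⟨h1, h2⟩ | ⟨h1, h2⟩ | ⟨h1, h2⟩ | ⟨h1, h2⟩
  · -- q = p - (1,0), so a = 0
    have hc : a - 1 = c := by omega
    have hd : b = d := by omega
    subst hc; subst hd
    have ha : a = 0 := by
      simp only [Prod.fst, Prod.snd] at hp hq ⊢
      omega
    subst ha
    have hdv : degZ (gridZ n) ((0:ℤ) - 1, b) = 1 := by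
      rw [degZ_eq]
      simp only [Prod.mk_add_mk, Prod.mk_sub_mk, mem_gridZ]
      split_ifs <;> omega
    rw [hdv, degZ_eq] at hdeg
    simp only [Prod.mk_add_mk, Prod.mk_sub_mk, mem_gridZ] at hdeg
    have hb : b = 0 ∨ b = (n:ℤ) - 1 := by
      split_ifs at hdeg <;> omega
    rcases hb with rfl | rfl
    · exact ⟨0, by simp [Ppts, Prod.ext_iff] <;> omega, by simp [Qpts, Prod.ext_iff] <;> omega⟩
    · exact ⟨4, by simp [Ppts, Prod.ext_iff] <;> omega, by simp [Qpts, Prod.ext_iff] <;> omega⟩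
  · -- q = p + (1,0), so a = n - 1
    have hc : a + 1 = c := by omega
    have hd : b = d := by omega
    subst hc; subst hd
    have ha : a = (n:ℤ) - 1 := by
      simp only [Prod.fst, Prod.snd] at hp hq ⊢
      omega
    subst ha
    have hdv : degZ (gridZ n) ((n:ℤ) - 1 + 1, b) = 1 := by
      rw [degZ_eq]
      simp only [Prod.mk_add_mk, Prod.mk_sub_mk, mem_gridZ]
      split_ifs <;> omega
    rw [hdv, degZ_eq] at hdeg
    simp only [Prod.mk_add_mk, Prod.mk_sub_mk, mem_gridZ] at hdeg
    have hb : b = 0 ∨ b = (n:ℤ) - 1 := by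
      split_ifs at hdeg <;> omega
    rcases hb with rfl | rfl
    · exact ⟨2, by simp [Ppts, Prod.ext_iff] <;> omega, by simp [Qpts, Prod.ext_iff] <;> omega⟩
    · exact ⟨6, by simp [Ppts, Prod.ext_iff] <;> omega, by simp [Qpts, Prod.ext_iff] <;> omega⟩
  · -- q = p - (0,1), so b = 0
    have hc : a = c := by omega
    have hd : b - 1 = d := by omega
    subst hc; subst hd
    have hb : b = 0 := by
      simp only [Prod.fst, Prod.snd] at hp hq ⊢
      omega
    subst hb
    have hdv : degZ (gridZ n) (a, (0:ℤ) - 1) = 1 := by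
      rw [degZ_eq]
      simp only [Prod.mk_add_mk, Prod.mk_sub_mk, mem_gridZ]
      split_ifs <;> omega
    rw [hdv, degZ_eq] at hdeg
    simp only [Prod.mk_add_mk, Prod.mk_sub_mk, mem_gridZ] at hdeg
    have ha : a = 0 ∨ a = (n:ℤ) - 1 := by
      split_ifs at hdeg <;> omega
    rcases ha with rfl | rfl
    · exact ⟨1, by simp [Ppts, Prod.ext_iff] <;> omega, by simp [Qpts, Prod.ext_iff] <;> omega⟩
    · exact ⟨3, by simp [Ppts, Prod.ext_iff] <;> omega, by simp [Qpts, Prod.ext_iff] <;> omega⟩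
  · -- q = p + (0,1), so b = n - 1
    have hc : a = c := by omega
    have hd : b + 1 = d := by omega
    subst hc; subst hd
    have hb : b = (n:ℤ) - 1 := by
      simp only [Prod.fst, Prod.snd] at hp hq ⊢
      omega
    subst hb
    have hdv : degZ (gridZ n) (a, (n:ℤ) - 1 + 1) = 1 := by
      rw [degZ_eq]
      simp only [Prod.mk_add_mk, Prod.mk_sub_mk, mem_gridZ]
      split_ifs <;> omega
    rw [hdv, degZ_eq] at hdeg
    simp only [Prod.mk_add_mk, Prod.mk_sub_mk, mem_gridZ] at hdeg
    have ha : a = 0 ∨ a = (n:ℤ) - 1 := by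
      split_ifs at hdeg <;> omega
    rcases ha with rfl | rfl
    · exact ⟨5, by simp [Ppts, Prod.ext_iff] <;> omega, by simp [Qpts, Prod.ext_iff] <;> omega⟩
    · exact ⟨7, by simp [Ppts, Prod.ext_iff] <;> omega, by simp [Qpts, Prod.ext_iff] <;> omega⟩

omit [NeZero L] in
lemma emb_sub_dir (p c : ℤ × ℤ) :
    emb L x (p - c) = emb L x p - ((c.1 : ZMod L), (c.2 : ZMod L)) := by
  obtain ⟨a, b⟩ := p; obtain ⟨e, f⟩ := c
  unfold emb
  rw [Prod.mk_sub_mk, Prod.ext_iff]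
  constructor <;> · simp; push_cast; ring

end SqAux

open SqAux

/-- the set of configurations obtained from the square configuration
`η^x` by one exchange across adjacent sites, different from `η^x` and of energy
`−2n(n−1) + 2`, has exactly `8` elements. -/
theorem square_neighbours_card (n L : ℕ) [NeZero L] (hn : 4 ≤ n) (hL : 2 * n < L)
    (x : Site L) :
    {ξ : Config L |
        (∃ u v : Site L, torusAdj L u v ∧ ξ = swapConf L (squareConf L n x) u v)
        ∧ ξ ≠ squareConf L n x
        ∧ confH L ξ = -(2 * (n : ℤ) * ((n : ℤ) - 1)) + 2}.ncard = 8 := by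
  let η : Config L := squareConf L n x
  let C : Fin 8 → Config L :=
    fun i => swapConf L η (emb L x (Ppts n i)) (emb L x (Qpts n i))
  have hPbox : ∀ i : Fin 8, boxP n (Ppts n i) :=
    fun i => boxP_of_grid (Ppts_grid hn i)
  have hQbox : ∀ i : Fin 8, boxP n (Qpts n i) := Qpts_box hn
  have hηQ : ∀ i : Fin 8, η (emb L x (Qpts n i)) = false := by
    intro i
    simp only [η, squareConf, decide_eq_false_iff_not]
    exact fun h => Qpts_not_grid hn i ((mem_square_iff hn hL (hQbox i)).1 h)
  have hηP : ∀ i : Fin 8, η (emb L x (Ppts n i)) = true := by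
    intro i
    simp only [η, squareConf, decide_eq_true_eq]
    exact (mem_square_iff hn hL (hPbox i)).2 (Ppts_grid hn i)
  have hPQne : ∀ i j : Fin 8, emb L x (Qpts n i) ≠ emb L x (Ppts n j) := by
    intro i j h
    exact Qpts_not_grid hn i
      (emb_inj hn hL (hQbox i) (hPbox j) h ▸ Ppts_grid hn j)
  have hvalQ : ∀ i : Fin 8, C i (emb L x (Qpts n i)) = true := by
    intro i
    show swapConf L η (emb L x (Ppts n i)) (emb L x (Qpts n i)) (emb L x (Qpts n i)) = true
    unfold swapConf
    rw [if_neg (hPQne i i), if_pos rfl]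
    exact hηP i
  have hCinj : Function.Injective C := by
    intro i j h
    have h1 : C j (emb L x (Qpts n i)) = true := by rw [← h]; exact hvalQ i
    by_cases h2 : emb L x (Qpts n i) = emb L x (Qpts n j)
    · exact Qpts_inj hn (emb_inj hn hL (hQbox i) (hQbox j) h2)
    · exfalso
      have h3 : swapConf L η (emb L x (Ppts n j)) (emb L x (Qpts n j))
          (emb L x (Qpts n i)) = true := h1
      unfold swapConf at h3
      rw [if_neg (hPQne i j), if_neg h2, hηQ i] at h3
      exact Bool.false_ne_true h3
  have hset : {ξ : Config L |
        (∃ u v : Site L, torusAdj L u v ∧ ξ = swapConf L (squareConf L n x) u v)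
        ∧ ξ ≠ squareConf L n x
        ∧ confH L ξ = -(2 * (n : ℤ) * ((n : ℤ) - 1)) + 2}
      = ↑((Finset.univ : Finset (Fin 8)).image C) := by
    ext ξ
    simp only [Set.mem_setOf_eq, Finset.coe_image, Finset.coe_univ, Set.image_univ,
      Set.mem_range]
    constructor
    · rintro ⟨⟨u, v, hadj, rfl⟩, hne, hH⟩
      have aux : ∀ u v : Site L, torusAdj L u v → η u = true → η v = false →
          confH L (swapConf L η u v) = -(2 * (n : ℤ) * ((n : ℤ) - 1)) + 2 →
          ∃ i : Fin 8, C i = swapConf L η u v := by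
        intro u v hadj hu hv hH
        have hu' : u ∈ squareSet L n x := by
          simpa only [η, squareConf, decide_eq_true_eq] using hu
        rw [squareSet_eq] at hu'
        obtain ⟨p, hp, rfl⟩ := Finset.mem_image.1 hu'
        have hv4 : ∃ c : ℤ × ℤ,
            (c = (1,0) ∨ c = (-1,0) ∨ c = (0,1) ∨ c = (0,-1)) ∧ v = emb L x (p - c) := by
          rcases hadj with h | h | h | h
          · refine ⟨(1,0), Or.inl rfl, ?_⟩
            rw [emb_sub_dir]
            rw [show v = emb L x p - (1, 0) by rw [← h]; ring]
            norm_num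
          · refine ⟨(-1,0), Or.inr (Or.inl rfl), ?_⟩
            rw [emb_sub_dir]
            rw [show v = emb L x p - (-1, 0) by rw [← h]; ring]
            norm_num
          · refine ⟨(0,1), Or.inr (Or.inr (Or.inl rfl)), ?_⟩
            rw [emb_sub_dir]
            rw [show v = emb L x p - (0, 1) by rw [← h]; ring]
            norm_num
          · refine ⟨(0,-1), Or.inr (Or.inr (Or.inr rfl)), ?_⟩
            rw [emb_sub_dir]
            rw [show v = emb L x p - (0, -1) by rw [← h]; ring]
            norm_num
        obtain ⟨c, hc, rfl⟩ := hv4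
        have hadjZ : adjZ p (p - c) := by
          have hsub : p - (p - c) = c := by ring
          rcases hc with rfl | rfl | rfl | rfl
          · exact Or.inl hsub
          · exact Or.inr (Or.inl hsub)
          · exact Or.inr (Or.inr (Or.inl hsub))
          · exact Or.inr (Or.inr (Or.inr hsub))
        have hboxq : boxP n (p - c) := by
          have hp' := mem_gridZ.1 hp
          obtain ⟨a, b⟩ := p; obtain ⟨c1, c2⟩ := c
          simp only [Prod.mk.injEq] at hc
          refine ⟨?_, ?_, ?_, ?_⟩ <;> simp only [Prod.mk_sub_mk] <;> simp <;> omega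
        have hq : p - c ∉ gridZ n := by
          intro hmem
          have : η (emb L x (p - c)) = true := by
            simp only [η, squareConf, decide_eq_true_eq]
            exact (mem_square_iff hn hL hboxq).2 hmem
          rw [hv] at this
          exact absurd this (by decide)
        have hdeg := (confH_swap_iff hn hL hp hq hadjZ).1 hH
        obtain ⟨i, hpi, hqi⟩ := deg_classify hn hp hq hadjZ hdeg
        exact ⟨i, by show swapConf L η _ _ = _; rw [← hpi, ← hqi]⟩
      by_cases hu : η u = true
      · by_cases hv : η v = true
        · exact absurd (swapConf_eq_self (hu.trans hv.symm)) hne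
        · exact aux u v hadj hu (by rwa [Bool.not_eq_true] at hv) hH
      · rw [Bool.not_eq_true] at hu
        by_cases hv : η v = true
        · have hH' : confH L (swapConf L η v u) = -(2 * (n : ℤ) * ((n : ℤ) - 1)) + 2 := by
            rwa [← swapConf_comm]
          obtain ⟨i, hi⟩ := aux v u (torusAdj_symm hadj) hv hu hH'
          exact ⟨i, by rw [hi, swapConf_comm]⟩
        · rw [Bool.not_eq_true] at hv
          exact absurd (swapConf_eq_self (hu.trans hv.symm)) hne
    · rintro ⟨i, rfl⟩
      refine ⟨⟨emb L x (Ppts n i), emb L x (Qpts n i),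
        (adj_transfer hn hL (hPbox i) (hQbox i)).2 (adjPQ hn i), rfl⟩, ?_, ?_⟩
      · intro h
        have h2 : (true : Bool) = false :=
          calc (true : Bool) = C i (emb L x (Qpts n i)) := (hvalQ i).symm
            _ = η (emb L x (Qpts n i)) := congrFun h _
            _ = false := hηQ i
        exact absurd h2 (by decide)
      · exact (confH_swap_iff hn hL (Ppts_grid hn i) (Qpts_not_grid hn i)
          (adjPQ hn i)).2 (by rw [degP hn i, degQ hn i])
  rw [hset, Set.ncard_coe_finset, Finset.card_image_of_injective _ hCinj,
    Finset.card_univ, Fintype.card_fin]
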